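/- arXiv:1105.3164 — 2 statements merged into one kernel-verified Lean document; each statement's English description precedes it below -/
import Mathlib

section
/- Let S_x, S_y be symmetric positive definite matrices of sizes N_x × N_x and N_y × N_y with positive definite square roots S_x^{1/2}, S_y^{1/2}, let ε > 0, let L be a constant real N_x × N_y matrix, and let f : ℝ^{N_x} → ℝ^{N_x} and g : ℝ^{N_y} → ℝ^{N_y} satisfy x^T S_x f(x) = 0 for all x and y^T S_y g(y) = 0 for all y. If x : ℝ → ℝ^{N_x} and y : ℝ → ℝ^{N_y} are differentiable and satisfy dx/dt = f(x) + S_x^{-1/2} L S_y^{1/2} y and dy/dt = (1/ε)[ g(y) − S_y^{-1/2} L^T S_x^{1/2} x ] for all t, then the total energy E(t) = (1/2) x(t)^T S_x x(t) + (ε/2) y(t)^T S_y y(t) is constant in t. -/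
open Matrix

lemma myDot {n : ℕ} {u v : ℝ → Fin n → ℝ} {u' v' : Fin n → ℝ} {t : ℝ}
    (hu : HasDerivAt u u' t) (hv : HasDerivAt v v' t) :
    HasDerivAt (fun s => u s ⬝ᵥ v s) (u' ⬝ᵥ v t + u t ⬝ᵥ v') t := by
  have h : ∀ i : Fin n, HasDerivAt (fun s => u s i * v s i)
      (u' i * v t i + u t i * v' i) t := fun i =>
    ((hasDerivAt_pi.mp hu) i).mul ((hasDerivAt_pi.mp hv) i)
  have := HasDerivAt.fun_sum (u := Finset.univ) (fun i _ => h i)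
  simpa [dotProduct, Finset.sum_add_distrib] using this

lemma myMulVec {m n : ℕ} (M : Matrix (Fin m) (Fin n) ℝ) {v : ℝ → Fin n → ℝ}
    {v' : Fin n → ℝ} {t : ℝ} (hv : HasDerivAt v v' t) :
    HasDerivAt (fun s => M.mulVec (v s)) (M.mulVec v') t := by
  apply hasDerivAt_pi.mpr
  intro i
  have h : ∀ j, HasDerivAt (fun s => M i j * v s j) (M i j * v' j) t := fun j =>
    ((hasDerivAt_pi.mp hv) j).const_mul _
  simpa [Matrix.mulVec, dotProduct] using
    HasDerivAt.fun_sum (u := Finset.univ) (fun j _ => h j)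

/-- for the two-scale system with linear energy-preserving coupling
`dx/dt = f(x) + S_x^{-1/2} L S_y^{1/2} y`, `dy/dt = (1/ε)[g(y) − S_y^{-1/2} L^T S_x^{1/2} x]`,
where `f` and `g` conserve their respective energies, the total energy
`E(t) = (1/2) x^T S_x x + (ε/2) y^T S_y y` is constant in time. -/
theorem total_energy_conservation_two_scale
    (Nx Ny : ℕ) (ε : ℝ) (hε : 0 < ε)
    (Sx sqrtSx : Matrix (Fin Nx) (Fin Nx) ℝ)
    (Sy sqrtSy : Matrix (Fin Ny) (Fin Ny) ℝ)
    (hSx : Sx.PosDef) (hSy : Sy.PosDef)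
    (hsqrtSx : sqrtSx.PosDef) (hsqrtSy : sqrtSy.PosDef)
    (hsqx : sqrtSx * sqrtSx = Sx) (hsqy : sqrtSy * sqrtSy = Sy)
    (L : Matrix (Fin Nx) (Fin Ny) ℝ)
    (f : (Fin Nx → ℝ) → (Fin Nx → ℝ)) (g : (Fin Ny → ℝ) → (Fin Ny → ℝ))
    (hf : ∀ v, v ⬝ᵥ Sx.mulVec (f v) = 0) (hg : ∀ v, v ⬝ᵥ Sy.mulVec (g v) = 0)
    (x : ℝ → Fin Nx → ℝ) (y : ℝ → Fin Ny → ℝ)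
    (hx : ∀ t : ℝ, HasDerivAt x (f (x t) + (sqrtSx⁻¹ * L * sqrtSy).mulVec (y t)) t)
    (hy : ∀ t : ℝ, HasDerivAt y
      ((1 / ε) • (g (y t) - (sqrtSy⁻¹ * Lᵀ * sqrtSx).mulVec (x t))) t) :
    ∀ t : ℝ,
      (1 / 2) * (x t ⬝ᵥ Sx.mulVec (x t)) + (ε / 2) * (y t ⬝ᵥ Sy.mulVec (y t)) =
        (1 / 2) * (x 0 ⬝ᵥ Sx.mulVec (x 0)) + (ε / 2) * (y 0 ⬝ᵥ Sy.mulVec (y 0)) := by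
  -- symmetry facts
  have hSxT : Sxᵀ = Sx := hSx.isHermitian
  have hSyT : Syᵀ = Sy := hSy.isHermitian
  have hsxT : sqrtSxᵀ = sqrtSx := hsqrtSx.isHermitian
  have hsyT : sqrtSyᵀ = sqrtSy := hsqrtSy.isHermitian
  have hsxI : IsUnit sqrtSx.det := isUnit_iff_ne_zero.mpr hsqrtSx.det_pos.ne'
  have hsyI : IsUnit sqrtSy.det := isUnit_iff_ne_zero.mpr hsqrtSy.det_pos.ne'
  -- Sx * sqrtSx⁻¹ = sqrtSx
  have hA : Sx * (sqrtSx⁻¹ * L * sqrtSy) = sqrtSx * L * sqrtSy := by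
    rw [← hsqx]
    rw [show sqrtSx * sqrtSx * (sqrtSx⁻¹ * L * sqrtSy)
        = sqrtSx * (sqrtSx * sqrtSx⁻¹) * L * sqrtSy by simp only [Matrix.mul_assoc]]
    rw [Matrix.mul_nonsing_inv _ hsxI, Matrix.mul_one]
  have hB : Sy * (sqrtSy⁻¹ * Lᵀ * sqrtSx) = sqrtSy * Lᵀ * sqrtSx := by
    rw [← hsqy]
    rw [show sqrtSy * sqrtSy * (sqrtSy⁻¹ * Lᵀ * sqrtSx)
        = sqrtSy * (sqrtSy * sqrtSy⁻¹) * Lᵀ * sqrtSx by simp only [Matrix.mul_assoc]]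
    rw [Matrix.mul_nonsing_inv _ hsyI, Matrix.mul_one]
  set E : ℝ → ℝ := fun t =>
    (1 / 2) * (x t ⬝ᵥ Sx.mulVec (x t)) + (ε / 2) * (y t ⬝ᵥ Sy.mulVec (y t)) with hE
  have hder : ∀ t, HasDerivAt E 0 t := by
    intro t
    set x' := f (x t) + (sqrtSx⁻¹ * L * sqrtSy).mulVec (y t) with hx'
    set y' := (1 / ε) • (g (y t) - (sqrtSy⁻¹ * Lᵀ * sqrtSx).mulVec (x t)) with hy'
    have h1 : HasDerivAt (fun s => x s ⬝ᵥ Sx.mulVec (x s))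
        (x' ⬝ᵥ Sx.mulVec (x t) + x t ⬝ᵥ Sx.mulVec x') t :=
      myDot (hx t) (myMulVec Sx (hx t))
    have h2 : HasDerivAt (fun s => y s ⬝ᵥ Sy.mulVec (y s))
        (y' ⬝ᵥ Sy.mulVec (y t) + y t ⬝ᵥ Sy.mulVec y') t :=
      myDot (hy t) (myMulVec Sy (hy t))
    have hsym1 : x' ⬝ᵥ Sx.mulVec (x t) = x t ⬝ᵥ Sx.mulVec x' := by
      rw [Matrix.dotProduct_mulVec, ← Matrix.mulVec_transpose, hSxT, dotProduct_comm]
    have hsym2 : y' ⬝ᵥ Sy.mulVec (y t) = y t ⬝ᵥ Sy.mulVec y' := by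
      rw [Matrix.dotProduct_mulVec, ← Matrix.mulVec_transpose, hSyT, dotProduct_comm]
    have hcross : x t ⬝ᵥ (sqrtSx * L * sqrtSy).mulVec (y t)
        = y t ⬝ᵥ (sqrtSy * Lᵀ * sqrtSx).mulVec (x t) := by
      rw [Matrix.dotProduct_mulVec, ← Matrix.mulVec_transpose, dotProduct_comm]
      congr 1
      rw [Matrix.transpose_mul, Matrix.transpose_mul, hsxT, hsyT, Matrix.mul_assoc]
    have keyx : x t ⬝ᵥ Sx.mulVec x' = x t ⬝ᵥ (sqrtSx * L * sqrtSy).mulVec (y t) := by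
      rw [hx', Matrix.mulVec_add, dotProduct_add, hf, zero_add,
        Matrix.mulVec_mulVec, hA]
    have keyy : y t ⬝ᵥ Sy.mulVec y' =
        (1 / ε) * (- (y t ⬝ᵥ (sqrtSy * Lᵀ * sqrtSx).mulVec (x t))) := by
      rw [hy', Matrix.mulVec_smul, dotProduct_smul, smul_eq_mul]
      congr 1
      rw [Matrix.mulVec_sub, dotProduct_sub, hg, zero_sub, Matrix.mulVec_mulVec, hB]
    have hEd : HasDerivAt E
        ((1 / 2) * (x' ⬝ᵥ Sx.mulVec (x t) + x t ⬝ᵥ Sx.mulVec x')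
          + (ε / 2) * (y' ⬝ᵥ Sy.mulVec (y t) + y t ⬝ᵥ Sy.mulVec y')) t :=
      (h1.const_mul _).add (h2.const_mul _)
    have : (1 / 2) * (x' ⬝ᵥ Sx.mulVec (x t) + x t ⬝ᵥ Sx.mulVec x')
          + (ε / 2) * (y' ⬝ᵥ Sy.mulVec (y t) + y t ⬝ᵥ Sy.mulVec y') = 0 := by
      rw [hsym1, hsym2, keyx, keyy, hcross]
      field_simp
      ring
    rwa [this] at hEd
  intro t
  have := is_const_of_deriv_eq_zero (f := E)
    (fun s => (hder s).differentiableAt) (fun s => (hder s).deriv) t 0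
  simpa [hE] using this
end

section
/- Let N, J be positive integers and λ_x, λ_y, ε > 0. Let x : ℝ → (ℤ → ℝ) and y : ℝ → (ℤ → ℝ) be differentiable in t, periodic in the sense that x(t)_{i+N} = x(t)_i and y(t)_{k+NJ} = y(t)_k for all integers i, k and all t, and satisfy the unforced undamped two-scale Lorenz equations dx_i/dt = x_{i−1}(x_{i+1} − x_{i−2}) − (λ_y/J) ∑_{j=0}^{J−1} y_{iJ+j} and dy_k/dt = (1/ε)[ y_{k+1}(y_{k−1} − y_{k+2}) + λ_x x_{⌊k/J⌋} ] for all integers i, k and all t. Then the total energy E(t) = (λ_x/2) ∑_{i=0}^{N−1} x(t)_i² + (ε λ_y/(2J)) ∑_{k=0}^{NJ−1} y(t)_k² is constant in t. -/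
private lemma sum_shift_per (M : ℕ) (h : ℤ → ℝ) (hp : ∀ k : ℤ, h (k + M) = h k) :
    ∑ i ∈ Finset.range M, h ((i : ℤ) + 1) = ∑ i ∈ Finset.range M, h (i : ℤ) := by
  cases M with
  | zero => simp
  | succ n =>
    rw [Finset.sum_range_succ, Finset.sum_range_succ']
    have h1 : h ((n : ℤ) + 1) = h 0 := by
      have := hp 0
      rw [zero_add] at this
      rw [← this]
      congr 1
    rw [h1]
    congr 1

private lemma sum_range_mul_eq (f : ℤ → ℝ) (N J : ℕ) :
    ∑ k ∈ Finset.range (N * J), f (k : ℤ)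
      = ∑ i ∈ Finset.range N, ∑ j ∈ Finset.range J, f ((i : ℤ) * J + j) := by
  induction N with
  | zero => simp
  | succ n ih =>
    rw [Nat.succ_mul, Finset.sum_range_add, ih, Finset.sum_range_succ]
    congr 1

private lemma fdiv_mul_add_eq (i j J : ℕ) (hj : j < J) :
    ((i : ℤ) * J + j).fdiv J = i := by
  have hJ : (0 : ℤ) < J := by exact_mod_cast Nat.pos_of_ne_zero (by omega)
  rw [Int.fdiv_eq_ediv_of_nonneg _ (le_of_lt hJ)]
  rw [add_comm, Int.add_mul_ediv_right _ _ (ne_of_gt hJ)]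
  rw [Int.ediv_eq_zero_of_lt (by positivity) (by exact_mod_cast hj)]
  ring

/-- the unforced undamped two-scale Lorenz model conserves the total energy
`E = (λ_x/2) ∑_{i<N} x_i² + (ε λ_y/(2J)) ∑_{k<NJ} y_k²`. -/
theorem two_scale_lorenz_total_energy_conservation
    (N J : ℕ) (hN : 0 < N) (hJ : 0 < J)
    (lamx lamy ε : ℝ) (hlamx : 0 < lamx) (hlamy : 0 < lamy) (hε : 0 < ε)
    (x y : ℝ → ℤ → ℝ)
    (hxper : ∀ (t : ℝ) (i : ℤ), x t (i + N) = x t i)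
    (hyper : ∀ (t : ℝ) (k : ℤ), y t (k + N * J) = y t k)
    (hx : ∀ (i : ℤ) (t : ℝ), HasDerivAt (fun t => x t i)
      (x t (i - 1) * (x t (i + 1) - x t (i - 2))
        - (lamy / J) * ∑ j ∈ Finset.range J, y t (i * J + j)) t)
    (hy : ∀ (k : ℤ) (t : ℝ), HasDerivAt (fun t => y t k)
      ((1 / ε) * (y t (k + 1) * (y t (k - 1) - y t (k + 2))
        + lamx * x t (Int.fdiv k J))) t) :
    ∀ t : ℝ,
      (lamx / 2) * (∑ i ∈ Finset.range N, x t i ^ 2)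
        + (ε * lamy / (2 * J)) * (∑ k ∈ Finset.range (N * J), y t k ^ 2) =
      (lamx / 2) * (∑ i ∈ Finset.range N, x 0 i ^ 2)
        + (ε * lamy / (2 * J)) * (∑ k ∈ Finset.range (N * J), y 0 k ^ 2) := by
  have hJ0 : (J : ℝ) ≠ 0 := Nat.cast_ne_zero.mpr hJ.ne'
  have hε0 : ε ≠ 0 := ne_of_gt hε
  set E : ℝ → ℝ := fun t =>
    (lamx / 2) * (∑ i ∈ Finset.range N, x t i ^ 2)
      + (ε * lamy / (2 * J)) * (∑ k ∈ Finset.range (N * J), y t k ^ 2) with hE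
  have key : ∀ t : ℝ, HasDerivAt E 0 t := by
    intro t
    -- derivative of each summand
    have hdx : HasDerivAt (fun t => ∑ i ∈ Finset.range N, x t (i : ℤ) ^ 2)
        (∑ i ∈ Finset.range N, (2 : ℝ) * x t (i : ℤ) ^ 1 *
          (x t ((i : ℤ) - 1) * (x t ((i : ℤ) + 1) - x t ((i : ℤ) - 2))
            - (lamy / J) * ∑ j ∈ Finset.range J, y t ((i : ℤ) * J + j))) t := by
      apply HasDerivAt.fun_sum
      intro i _
      simpa using (hx (i : ℤ) t).fun_pow 2
    have hdy : HasDerivAt (fun t => ∑ k ∈ Finset.range (N * J), y t (k : ℤ) ^ 2)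
        (∑ k ∈ Finset.range (N * J), (2 : ℝ) * y t (k : ℤ) ^ 1 *
          ((1 / ε) * (y t ((k : ℤ) + 1) * (y t ((k : ℤ) - 1) - y t ((k : ℤ) + 2))
            + lamx * x t (Int.fdiv (k : ℤ) J)))) t := by
      apply HasDerivAt.fun_sum
      intro k _
      simpa using (hy (k : ℤ) t).fun_pow 2
    have hD : HasDerivAt E
        ((lamx / 2) * (∑ i ∈ Finset.range N, (2 : ℝ) * x t (i : ℤ) ^ 1 *
          (x t ((i : ℤ) - 1) * (x t ((i : ℤ) + 1) - x t ((i : ℤ) - 2))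
            - (lamy / J) * ∑ j ∈ Finset.range J, y t ((i : ℤ) * J + j)))
        + (ε * lamy / (2 * J)) * (∑ k ∈ Finset.range (N * J), (2 : ℝ) * y t (k : ℤ) ^ 1 *
          ((1 / ε) * (y t ((k : ℤ) + 1) * (y t ((k : ℤ) - 1) - y t ((k : ℤ) + 2))
            + lamx * x t (Int.fdiv (k : ℤ) J))))) t :=
      (hdx.const_mul _).add (hdy.const_mul _)
    -- the derivative vanishes
    have hA : ∑ i ∈ Finset.range N,
        x t (i : ℤ) * (x t ((i : ℤ) - 1) * (x t ((i : ℤ) + 1) - x t ((i : ℤ) - 2))) = 0 := by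
      set g : ℤ → ℝ := fun k => x t (k - 2) * x t (k - 1) * x t k with hg
      have hgp : ∀ k : ℤ, g (k + N) = g k := by
        intro k
        simp only [hg]
        rw [show k + (N : ℤ) - 2 = (k - 2) + N by ring,
          show k + (N : ℤ) - 1 = (k - 1) + N by ring, hxper, hxper, hxper]
      have hshift := sum_shift_per N g hgp
      calc ∑ i ∈ Finset.range N,
            x t (i : ℤ) * (x t ((i : ℤ) - 1) * (x t ((i : ℤ) + 1) - x t ((i : ℤ) - 2)))
          = ∑ i ∈ Finset.range N, (g ((i : ℤ) + 1) - g (i : ℤ)) := by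
            refine Finset.sum_congr rfl fun i _ => ?_
            simp only [hg]
            rw [show (i : ℤ) + 1 - 2 = (i : ℤ) - 1 by ring,
              show (i : ℤ) + 1 - 1 = (i : ℤ) by ring]
            ring
        _ = 0 := by rw [Finset.sum_sub_distrib, hshift, sub_self]
    have hB : ∑ k ∈ Finset.range (N * J),
        y t (k : ℤ) * (y t ((k : ℤ) + 1) * (y t ((k : ℤ) - 1) - y t ((k : ℤ) + 2))) = 0 := by
      set g : ℤ → ℝ := fun k => y t (k - 1) * y t k * y t (k + 1) with hg
      have hgp : ∀ k : ℤ, g (k + (N * J : ℕ)) = g k := by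
        intro k
        simp only [hg]
        push_cast
        rw [show k + (N : ℤ) * J - 1 = (k - 1) + N * J by ring,
          show k + (N : ℤ) * J + 1 = (k + 1) + N * J by ring, hyper, hyper, hyper]
      have hshift := sum_shift_per (N * J) g hgp
      calc ∑ k ∈ Finset.range (N * J),
            y t (k : ℤ) * (y t ((k : ℤ) + 1) * (y t ((k : ℤ) - 1) - y t ((k : ℤ) + 2)))
          = ∑ k ∈ Finset.range (N * J), (g (k : ℤ) - g ((k : ℤ) + 1)) := by
            refine Finset.sum_congr rfl fun k _ => ?_
            simp only [hg]
            rw [show (k : ℤ) + 1 - 1 = (k : ℤ) by ring,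
              show (k : ℤ) + 1 + 1 = (k : ℤ) + 2 by ring]
            ring
        _ = 0 := by rw [Finset.sum_sub_distrib, hshift, sub_self]
    have hC : ∑ k ∈ Finset.range (N * J), y t (k : ℤ) * x t (Int.fdiv (k : ℤ) J)
        = ∑ i ∈ Finset.range N,
            x t (i : ℤ) * ∑ j ∈ Finset.range J, y t ((i : ℤ) * J + j) := by
      rw [sum_range_mul_eq (fun k => y t k * x t (Int.fdiv k J)) N J]
      refine Finset.sum_congr rfl fun i _ => ?_
      rw [Finset.mul_sum]
      refine Finset.sum_congr rfl fun j hj => ?_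
      rw [fdiv_mul_add_eq i j J (Finset.mem_range.mp hj)]
      ring
    have eD1 : (∑ i ∈ Finset.range N, (2 : ℝ) * x t (i : ℤ) ^ 1 *
        (x t ((i : ℤ) - 1) * (x t ((i : ℤ) + 1) - x t ((i : ℤ) - 2))
          - (lamy / J) * ∑ j ∈ Finset.range J, y t ((i : ℤ) * J + j)))
        = 2 * (∑ i ∈ Finset.range N,
            x t (i : ℤ) * (x t ((i : ℤ) - 1) * (x t ((i : ℤ) + 1) - x t ((i : ℤ) - 2))))
          - 2 * (lamy / J) * (∑ i ∈ Finset.range N,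
            x t (i : ℤ) * ∑ j ∈ Finset.range J, y t ((i : ℤ) * J + j)) := by
      rw [Finset.mul_sum, Finset.mul_sum, ← Finset.sum_sub_distrib]
      exact Finset.sum_congr rfl fun i _ => by ring
    have eD2 : (∑ k ∈ Finset.range (N * J), (2 : ℝ) * y t (k : ℤ) ^ 1 *
        ((1 / ε) * (y t ((k : ℤ) + 1) * (y t ((k : ℤ) - 1) - y t ((k : ℤ) + 2))
          + lamx * x t (Int.fdiv (k : ℤ) J))))
        = (2 / ε) * (∑ k ∈ Finset.range (N * J),
            y t (k : ℤ) * (y t ((k : ℤ) + 1) * (y t ((k : ℤ) - 1) - y t ((k : ℤ) + 2))))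
          + (2 * lamx / ε) * (∑ k ∈ Finset.range (N * J),
            y t (k : ℤ) * x t (Int.fdiv (k : ℤ) J)) := by
      rw [Finset.mul_sum, Finset.mul_sum, ← Finset.sum_add_distrib]
      exact Finset.sum_congr rfl fun k _ => by ring
    rw [eD1, eD2, hA, hB, hC] at hD
    convert hD using 1
    field_simp
    ring
  intro t
  exact is_const_of_deriv_eq_zero (fun s => (key s).differentiableAt)
    (fun s => (key s).deriv) t 0
end
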